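/- arXiv:math/0511196 — 8 statements merged into one kernel-verified Lean document; each statement's English description precedes it below -/
import Mathlib

section
/- If a and b are relatively prime positive integers, then for every nonnegative integer n, the number of solutions (x,y) in nonnegative integers to ax + by = n equals n/(ab) - {b⁻¹n/a} - {a⁻¹n/b} + 1, where {x} denotes the fractional part of x, b⁻¹ is any integer with b⁻¹b ≡ 1 (mod a), and a⁻¹ is any integer with a⁻¹a ≡ 1 (mod b). -/
/-- Popoviciu's formula for the restricted partition function of two coprime
positive integers. -/
theorem popoviciu_formula (a b : ℕ) (ha : 0 < a) (hb : 0 < b)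
    (hab : Nat.Coprime a b) (binv ainv : ℤ)
    (hbinv : binv * (b : ℤ) ≡ 1 [ZMOD (a : ℤ)])
    (hainv : ainv * (a : ℤ) ≡ 1 [ZMOD (b : ℤ)]) (n : ℕ) :
    (Nat.card {p : ℕ × ℕ // a * p.1 + b * p.2 = n} : ℝ)
      = (n : ℝ) / (a * b)
        - Int.fract (((binv * (n : ℤ) : ℤ) : ℝ) / (a : ℝ))
        - Int.fract (((ainv * (n : ℤ) : ℤ) : ℝ) / (b : ℝ)) + 1 := by
  have haz : (0:ℤ) < a := by exact_mod_cast ha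
  have hbz : (0:ℤ) < b := by exact_mod_cast hb
  set x0 : ℕ := ((ainv * n) % (b:ℤ)).toNat with hx0def
  have hx0cast : (x0:ℤ) = (ainv * n) % (b:ℤ) :=
    Int.toNat_of_nonneg (Int.emod_nonneg _ hbz.ne')
  have hx0lt : x0 < b := by
    have h := Int.emod_lt_of_pos (ainv * n) hbz
    rw [← hx0cast] at h
    exact_mod_cast h
  -- x0 ≡ ainv * n [ZMOD b]
  have hx0mod : (x0:ℤ) ≡ ainv * n [ZMOD (b:ℤ)] := by
    rw [hx0cast]
    exact Int.emod_emod_of_dvd _ dvd_rfl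
  -- b ∣ n - a * x0
  have hdvd : (b:ℤ) ∣ (n:ℤ) - a * x0 := by
    have h1 : (a:ℤ) * x0 ≡ (ainv * a) * n [ZMOD (b:ℤ)] := by
      calc (a:ℤ) * x0 ≡ a * (ainv * n) [ZMOD (b:ℤ)] := hx0mod.mul_left _
        _ = (ainv * a) * n := by ring
    have h2 : (a:ℤ) * x0 ≡ n [ZMOD (b:ℤ)] := by
      calc (a:ℤ) * x0 ≡ (ainv * a) * n [ZMOD (b:ℤ)] := h1
        _ ≡ 1 * n [ZMOD (b:ℤ)] := hainv.mul_right n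
        _ = n := by ring
    exact h2.dvd
  set m : ℤ := ((n:ℤ) - a * x0) / b with hmdef
  have hm : (b:ℤ) * m = (n:ℤ) - a * x0 := Int.mul_ediv_cancel' hdvd
  -- m ≡ binv * n [ZMOD a]
  have hmmod : m ≡ binv * n [ZMOD (a:ℤ)] := by
    have h1 : (b:ℤ) * m ≡ n [ZMOD (a:ℤ)] := by
      rw [hm]
      exact Int.modEq_iff_dvd.mpr ⟨x0, by ring⟩
    calc m ≡ (binv * b) * m [ZMOD (a:ℤ)] := by
          calc m = 1 * m := by ring
            _ ≡ (binv * b) * m [ZMOD (a:ℤ)] := hbinv.symm.mul_right m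
      _ = binv * (b * m) := by ring
      _ ≡ binv * n [ZMOD (a:ℤ)] := h1.mul_left binv
  -- the cardinality as an integer
  have hcard : (Nat.card {p : ℕ × ℕ // a * p.1 + b * p.2 = n} : ℤ) = m / a + 1 := by
    -- any solution has x ≡ x0 mod b
    have hsolmod : ∀ x y : ℕ, a * x + b * y = n → x % b = x0 := by
      intro x y hxy
      have h1 : (x:ℤ) ≡ ainv * n [ZMOD (b:ℤ)] := by
        have h2 : (a:ℤ) * x ≡ n [ZMOD (b:ℤ)] := by
          have : (n:ℤ) - a * x = b * y := by
            have := hxy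
            push_cast [← this]
            ring
          exact (Int.modEq_iff_dvd.mpr ⟨y, by linarith⟩)
        calc (x:ℤ) = 1 * x := by ring
          _ ≡ (ainv * a) * x [ZMOD (b:ℤ)] := hainv.symm.mul_right x
          _ = ainv * (a * x) := by ring
          _ ≡ ainv * n [ZMOD (b:ℤ)] := h2.mul_left ainv
      have h3 : (x:ℤ) % b = (ainv * n) % b := h1
      have h4 : ((x % b : ℕ):ℤ) = (x0:ℤ) := by
        push_cast
        rw [h3, hx0cast]
      exact_mod_cast h4
    by_cases hc : a * x0 ≤ n
    · -- nonempty case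
      set N : ℕ := (n - a * x0) / (a * b) + 1 with hNdef
      have hkey : ∀ k : ℕ, (a * (x0 + b * k) ≤ n ↔ k < N) := by
        intro k
        rw [hNdef, Nat.lt_succ_iff, Nat.le_div_iff_mul_le (Nat.mul_pos ha hb)]
        have hexp : a * (x0 + b * k) = a * x0 + k * (a * b) := by ring
        rw [hexp]
        omega
      have e : {p : ℕ × ℕ // a * p.1 + b * p.2 = n} ≃ Fin N := by
        refine ⟨fun p => ⟨p.1.1 / b, ?_⟩, fun k => ⟨(x0 + b * k, (n - a * (x0 + b * k)) / b), ?_⟩, ?_, ?_⟩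
        · obtain ⟨⟨x, y⟩, hxy⟩ := p
          have hxmod : x % b = x0 := hsolmod x y hxy
          have hx : x0 + b * (x / b) = x := by
            have := Nat.mod_add_div x b
            omega
          rw [← hkey, hx]
          simp only at hxy
          omega
        · have hle : a * (x0 + b * k) ≤ n := (hkey k).mpr k.2
          have hdvd2 : b ∣ n - a * (x0 + b * (k:ℕ)) := by
            have h1 : (b:ℤ) ∣ ((n:ℤ) - a * (x0 + b * (k:ℕ))) := by
              have heq : ((n:ℤ) - a * (x0 + b * (k:ℕ))) = ((n:ℤ) - a * x0) - b * (a * k) := by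
                push_cast; ring
              rw [heq]
              exact dvd_sub hdvd ⟨a * k, rfl⟩
            have h2 : ((n - a * (x0 + b * (k:ℕ)) : ℕ) : ℤ) = (n:ℤ) - a * (x0 + b * (k:ℕ)) := by
              push_cast [Nat.cast_sub hle]
              ring
            rw [← h2] at h1
            exact_mod_cast h1
          have h3 := Nat.mul_div_cancel' hdvd2
          simp only
          omega
        · rintro ⟨⟨x, y⟩, hxy⟩
          have hxmod : x % b = x0 := hsolmod x y hxy
          have hx : x0 + b * (x / b) = x := by
            have := Nat.mod_add_div x b
            omega
          apply Subtype.ext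
          have hxy' : a * x + b * y = n := hxy
          simp only [hx]
          have hby : n - a * x = b * y := by omega
          rw [hby, Nat.mul_div_cancel_left y hb]
        · intro k
          apply Fin.ext
          show (x0 + b * (k:ℕ)) / b = k
          rw [Nat.add_mul_div_left _ _ hb, Nat.div_eq_of_lt hx0lt, Nat.zero_add]
      rw [Nat.card_eq_of_equiv_fin e]
      have h1 : ((n - a * x0 : ℕ) : ℤ) = b * m := by
        rw [hm, Nat.cast_sub hc]
        push_cast
        ring
      have h2 : (((n - a * x0) / (a * b) : ℕ) : ℤ) = m / a := by
        rw [Int.natCast_div, h1]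
        push_cast
        rw [show (a:ℤ) * b = b * a by ring, Int.mul_ediv_mul_of_pos _ _ hbz]
      rw [hNdef, Nat.cast_add, Nat.cast_one, h2]
    · have he : IsEmpty {p : ℕ × ℕ // a * p.1 + b * p.2 = n} := by
        constructor
        rintro ⟨⟨x, y⟩, hxy⟩
        have hxy' : a * x + b * y = n := hxy
        have hxmod : x % b = x0 := hsolmod x y hxy
        have hx0le : x0 ≤ x := hxmod ▸ Nat.mod_le x b
        have h1 : a * x0 ≤ a * x := Nat.mul_le_mul_left a hx0le
        have h2 : a * x ≤ n := by omega
        omega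
      rw [Nat.card_of_isEmpty]
      have hmneg : m < 0 := by
        by_contra h
        push_neg at h
        have : (0:ℤ) ≤ b * m := mul_nonneg hbz.le h
        rw [hm] at this
        have : (a:ℤ) * x0 ≤ n := by linarith
        have : a * x0 ≤ n := by exact_mod_cast this
        exact hc this
      have hmgt : -(a:ℤ) < m := by
        have h1 : (b:ℤ) * (-(a:ℤ)) < b * m := by
          rw [hm]
          have h2 : (a:ℤ) * x0 < a * b := by
            have : (x0:ℤ) < b := by exact_mod_cast hx0lt
            exact mul_lt_mul_of_pos_left this haz
          have hn0 : (0:ℤ) ≤ n := Int.natCast_nonneg n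
          nlinarith
        exact lt_of_mul_lt_mul_left h1 hbz.le
      have h3 : (m + 1 * a) / a = m / a + 1 := Int.add_mul_ediv_right m 1 haz.ne'
      have h4 : (m + 1 * a) / a = 0 :=
        Int.ediv_eq_zero_of_lt (by linarith) (by linarith)
      omega
  -- now the real computation
  have hfract1 : Int.fract (((ainv * (n : ℤ) : ℤ) : ℝ) / (b : ℝ)) = (x0 : ℝ) / b := by
    rw [Int.fract_div_intCast_eq_div_intCast_mod, ← hx0cast]
    norm_num
  have hfract2 : Int.fract (((binv * (n : ℤ) : ℤ) : ℝ) / (a : ℝ)) = ((m % a : ℤ) : ℝ) / a := by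
    rw [Int.fract_div_intCast_eq_div_intCast_mod]
    have heq : (binv * (n:ℤ)) % (a:ℤ) = m % (a:ℤ) := hmmod.symm
    rw [heq]
  rw [hfract1, hfract2]
  have hcardR : (Nat.card {p : ℕ × ℕ // a * p.1 + b * p.2 = n} : ℝ)
      = ((m / a : ℤ) : ℝ) + 1 := by exact_mod_cast hcard
  rw [hcardR]
  have h1 : (n:ℝ) = b * (m:ℝ) + a * x0 := by
    have := hm
    have h := congrArg (fun z : ℤ => (z : ℝ)) hm
    push_cast at h
    linarith
  have h2 : (m:ℝ) = a * ((m / a : ℤ) : ℝ) + ((m % a : ℤ) : ℝ) := by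
    have h := congrArg (fun z : ℤ => (z : ℝ)) (Int.mul_ediv_add_emod m a)
    push_cast at h
    linarith
  have haR : (a:ℝ) ≠ 0 := by positivity
  have hbR : (b:ℝ) ≠ 0 := by positivity
  rw [h1, h2]
  field_simp
  ring
end

section
/- For any positive integer a and any integer t, the fractional part satisfies -{t/a} = (1-a)/(2a) + (1/a) · Σ_{k=1}^{a-1} ω^{tk}/(1 - ω^{-k}), where ω = e^{2πi/a} is a primitive a-th root of unity. -/
/-!
For an `n`-th root of unity `x ≠ 1` one has `∑_{m<n} m x^m = n / (x - 1)`, so every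
`1 / (1 - ω^{-k})` expands as `-(1/n) ∑_{m<n} m ω^{-km}`. Exchanging the two sums, orthogonality
of the roots of unity turns `∑_{k=1}^{n-1} ω^{(t-m)k}` into `n·[m ≡ t mod n] - 1`, so the whole sum
is `-(t mod n) + (1/n) ∑_{m<n} m = (n - 1)/2 - (t mod n)`.
-/

open Finset

theorem sub_one_mul_sum_range_mul_pow {R : Type*} [CommRing R] (x : R) (n : ℕ) :
    (x - 1) * ∑ m ∈ range n, (m : R) * x ^ m + ∑ m ∈ range n, x ^ m = (n - 1) * x ^ n + 1 := by
  induction n with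
  | zero => simp
  | succ n ih =>
    rw [sum_range_succ, sum_range_succ (fun m => x ^ m)]
    push_cast
    linear_combination ih

theorem sum_range_mul_pow_of_pow_eq_one {K : Type*} [Field K] {x : K} {n : ℕ} (hx : x ≠ 1)
    (hxn : x ^ n = 1) : ∑ m ∈ range n, (m : K) * x ^ m = n / (x - 1) := by
  have hgeom : ∑ m ∈ range n, x ^ m = 0 := by rw [geom_sum_eq hx, hxn, sub_self, zero_div]
  have h := sub_one_mul_sum_range_mul_pow x n
  rw [hgeom, hxn] at h
  rw [eq_div_iff (sub_ne_zero.2 hx)]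
  linear_combination h

theorem Int.sum_range_ite_dvd_sub_eq_emod {n : ℕ} (hn : 0 < n) (t : ℤ) :
    ∑ m ∈ Finset.range n, (if (n : ℤ) ∣ t - m then (m : ℤ) else 0) = t % n := by
  have hn' : (0 : ℤ) < n := by exact_mod_cast hn
  obtain ⟨r, hr⟩ := Int.eq_ofNat_of_zero_le (Int.emod_nonneg t hn'.ne')
  have hrn : r < n := by have := Int.emod_lt_of_pos t hn'; omega
  have hdvd (m : ℕ) (hm : m < n) : (n : ℤ) ∣ t - m ↔ m = r := by
    rw [← Int.modEq_iff_dvd, Int.ModEq, Int.emod_eq_of_lt (by omega) (by omega)]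
    omega
  rw [hr, sum_eq_single_of_mem r (mem_range.2 hrn)]
  · simp [hdvd r hrn]
  · intro m hm hmr
    rw [if_neg (mt (hdvd m (mem_range.1 hm)).1 hmr)]

namespace IsPrimitiveRoot

variable {K : Type*} [Field K] {ζ : K} {n : ℕ}

theorem sum_range_zpow_mul (hζ : IsPrimitiveRoot ζ n) (j : ℤ) :
    ∑ k ∈ range n, ζ ^ (j * k) = if (n : ℤ) ∣ j then (n : K) else 0 := by
  have hpow (k : ℕ) : ζ ^ (j * k) = (ζ ^ j) ^ k := by rw [zpow_mul, zpow_natCast]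
  simp only [hpow]
  split_ifs with hj
  · simp [(hζ.zpow_eq_one_iff_dvd j).2 hj]
  · have hζj : (ζ ^ j) ^ n = 1 := by
      rw [← zpow_natCast, ← zpow_mul, mul_comm, zpow_mul, zpow_natCast, hζ.pow_eq_one, one_zpow]
    rw [geom_sum_eq (mt (hζ.zpow_eq_one_iff_dvd j).1 hj), hζj, sub_self, zero_div]

theorem sum_Ico_zpow_mul (hζ : IsPrimitiveRoot ζ n) (hn : 0 < n) (j : ℤ) :
    ∑ k ∈ Ico 1 n, ζ ^ (j * k) = (if (n : ℤ) ∣ j then (n : K) else 0) - 1 := by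
  have h := hζ.sum_range_zpow_mul j
  rw [range_eq_Ico, sum_eq_sum_Ico_succ_bot hn] at h
  simp only [Nat.cast_zero, mul_zero, zpow_zero] at h
  linear_combination h

theorem zpow_mul_div_one_sub_zpow_neg (hζ : IsPrimitiveRoot ζ n) (t : ℤ) {k : ℕ} (hk : 0 < k)
    (hkn : k < n) :
    ζ ^ (t * k) / (1 - ζ ^ (-(k : ℤ)))
      = -(n : K)⁻¹ * ∑ m ∈ range n, (m : K) * ζ ^ ((t - m) * k) := by
  have hx : ζ ^ (-(k : ℤ)) ≠ 1 := by
    rw [zpow_neg, zpow_natCast, inv_ne_one]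
    exact hζ.pow_ne_one_of_pos_of_lt hk.ne' hkn
  have hxn : (ζ ^ (-(k : ℤ))) ^ n = 1 := by
    rw [← zpow_natCast, ← zpow_mul, mul_comm, zpow_mul, zpow_natCast, hζ.pow_eq_one, one_zpow]
  have hshift : ∑ m ∈ range n, (m : K) * ζ ^ ((t - m) * k)
      = ζ ^ (t * k) * ∑ m ∈ range n, (m : K) * (ζ ^ (-(k : ℤ))) ^ m := by
    rw [mul_sum]
    refine sum_congr rfl fun m _ => ?_
    rw [← zpow_natCast, ← zpow_mul, mul_left_comm, ← zpow_add₀ (hζ.ne_zero (by omega))]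
    ring_nf
  have : NeZero n := ⟨by omega⟩
  have hn0 : (n : K) ≠ 0 := hζ.neZero'.out
  have h₁ : 1 - ζ ^ (-(k : ℤ)) ≠ 0 := sub_ne_zero.2 hx.symm
  have h₂ : ζ ^ (-(k : ℤ)) - 1 ≠ 0 := sub_ne_zero.2 hx
  rw [hshift, sum_range_mul_pow_of_pow_eq_one hx hxn]
  field_simp
  ring

theorem two_mul_sum_Ico_zpow_mul_div_one_sub_zpow_neg (hζ : IsPrimitiveRoot ζ n) (hn : 0 < n)
    (t : ℤ) :
    2 * ∑ k ∈ Ico 1 n, ζ ^ (t * k) / (1 - ζ ^ (-(k : ℤ))) = n - 1 - 2 * ((t % n : ℤ) : K) := by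
  have : NeZero n := ⟨hn.ne'⟩
  have hn0 : (n : K) ≠ 0 := hζ.neZero'.out
  have hres : ∑ m ∈ range n, (m : K) * (if (n : ℤ) ∣ t - m then (n : K) else 0)
      = n * ((t % n : ℤ) : K) := by
    have h := congrArg (Int.cast : ℤ → K) (Int.sum_range_ite_dvd_sub_eq_emod hn t)
    push_cast [apply_ite] at h
    simp_rw [mul_ite, mul_zero, mul_comm _ (n : K), ← h, mul_sum, mul_ite, mul_zero]
  have hgauss : (∑ m ∈ range n, (m : K)) * 2 = n * (n - 1) := by
    have h := congrArg (Nat.cast : ℕ → K) (sum_range_id_mul_two n)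
    push_cast [Nat.cast_pred hn] at h
    exact h
  rw [sum_congr rfl fun k hk => hζ.zpow_mul_div_one_sub_zpow_neg t (mem_Ico.1 hk).1
    (mem_Ico.1 hk).2, ← mul_sum, sum_comm]
  simp_rw [← mul_sum, hζ.sum_Ico_zpow_mul hn, mul_sub, mul_one, sum_sub_distrib, hres]
  field_simp
  linear_combination hgauss

end IsPrimitiveRoot

/-- Discrete Fourier expansion of the negative fractional part:
`-{t/a} = (1-a)/(2a) + (1/a) ∑_{k=1}^{a-1} ω^{tk}/(1-ω^{-k})`, `ω = e^{2πi/a}`. -/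
theorem fract_discrete_fourier (a : ℕ) (ha : 0 < a) (t : ℤ) :
    (-(Int.fract ((t : ℝ) / (a : ℝ))) : ℂ)
      = ((1 : ℂ) - (a : ℂ)) / (2 * (a : ℂ))
        + (1 / (a : ℂ)) * ∑ k ∈ Finset.Ico 1 a,
            Complex.exp (2 * Real.pi * Complex.I / (a : ℂ)) ^ (t * (k : ℤ)) /
              (1 - Complex.exp (2 * Real.pi * Complex.I / (a : ℂ)) ^ (-(k : ℤ))) := by
  have hω := Complex.isPrimitiveRoot_exp a ha.ne'
  have key := hω.two_mul_sum_Ico_zpow_mul_div_one_sub_zpow_neg ha t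
  have ha0 : (a : ℂ) ≠ 0 := by exact_mod_cast ha.ne'
  rw [Int.fract_div_intCast_eq_div_intCast_mod]
  push_cast
  field_simp
  linear_combination -key
end

section
/- Let M be the 2×3 integer matrix with columns m₁ = (x₁,y₁), m₂ = (x₂,y₂), m₃ = (x₃,y₃), all with positive first coordinates and y₁/x₁ < y₂/x₂ < y₃/x₃. Define Y₁₂ = x₁y₂ - y₁x₂, Y₁₃ = x₁y₃ - y₁x₃, Y₂₃ = x₂y₃ - y₂x₃. Then the truncated power T satisfies: for (x,y) in the closed cone spanned by m₁ and m₂, T((x,y)|M) = (yx₁ - xy₁)/(Y₁₂·Y₁₃), and for (x,y) in the closed cone spanned by m₂ and m₃, T((x,y)|M) = (xy₃ - yx₃)/(Y₂₃·Y₁₃). -/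
open MeasureTheory

/-- Truncated power of a 2×2 matrix with columns `m1, m2`:
`1/|det|` on the closed cone spanned by the columns, `0` elsewhere. -/
noncomputable def T2 (m1 m2 x : ℝ × ℝ) : ℝ :=
  open Classical in
  if ∃ a b : ℝ, 0 ≤ a ∧ 0 ≤ b ∧ x = a • m1 + b • m2 then
    |m1.1 * m2.2 - m1.2 * m2.1|⁻¹
  else 0

/-- The multivariate truncated power of a `2×n` matrix (`n ≥ 2`), given by the
columns as a list, defined by integrating out columns one at a time:
`T(x | m :: M) = ∫_{t>0} T(x - t m | M) dt`. -/
noncomputable def Ttp : List (ℝ × ℝ) → (ℝ × ℝ) → ℝ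
  | [m1, m2] => T2 m1 m2
  | m :: m' :: m'' :: rest => fun x =>
      ∫ t in Set.Ioi (0 : ℝ), Ttp (m' :: m'' :: rest) (x - t • m)
  | _ => fun _ => 0

/-!
Integrating out the first column, `T(x | m, p, q) = ∫_{t > 0} T(x - t m | p, q) dt`, and
`x - t m` lies in the cone of `p, q` exactly for `t` in an interval whose endpoints are ratios of
2×2 determinants (Cramer's rule). So `T(x | m, p, q)` is `1 / det(p, q)` times the length of that
interval cut to `t > 0`. On the cone of `m, p` the interval starts at the `m`-coordinate of `x`,
on the cone of `p, q` it starts at a nonpositive value; in both cases its length is linear in `x`.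
-/

def det2 (p q : ℝ × ℝ) : ℝ := p.1 * q.2 - p.2 * q.1

def posCone (p q : ℝ × ℝ) : Set (ℝ × ℝ) := {x | ∃ a b : ℝ, 0 ≤ a ∧ 0 ≤ b ∧ x = a • p + b • q}

lemma det2_smul_add_smul_left (a b : ℝ) (p q r : ℝ × ℝ) :
    det2 (a • p + b • q) r = a * det2 p r + b * det2 q r := by
  simp only [det2, Prod.fst_add, Prod.snd_add, Prod.smul_fst, Prod.smul_snd, smul_eq_mul]; ring

lemma det2_smul_add_smul_right (a b : ℝ) (p q r : ℝ × ℝ) :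
    det2 r (a • p + b • q) = a * det2 r p + b * det2 r q := by
  simp only [det2, Prod.fst_add, Prod.snd_add, Prod.smul_fst, Prod.smul_snd, smul_eq_mul]; ring

lemma det2_sub_smul_left (x m r : ℝ × ℝ) (t : ℝ) :
    det2 (x - t • m) r = det2 x r - t * det2 m r := by
  simp only [det2, Prod.fst_sub, Prod.snd_sub, Prod.smul_fst, Prod.smul_snd, smul_eq_mul]; ring

lemma det2_sub_smul_right (x m r : ℝ × ℝ) (t : ℝ) :
    det2 r (x - t • m) = det2 r x - t * det2 r m := by
  simp only [det2, Prod.fst_sub, Prod.snd_sub, Prod.smul_fst, Prod.smul_snd, smul_eq_mul]; ring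

lemma det2_swap (p q : ℝ × ℝ) : det2 q p = -det2 p q := by
  unfold det2; ring

lemma det2_self (p : ℝ × ℝ) : det2 p p = 0 := by
  unfold det2; ring

-- Cramer's rule: the coefficients of `x` in the basis `p, q` are `det2 x q / det2 p q` and
-- `det2 p x / det2 p q`.
lemma mem_posCone_iff {p q : ℝ × ℝ} (hpq : 0 < det2 p q) (x : ℝ × ℝ) :
    x ∈ posCone p q ↔ 0 ≤ det2 x q ∧ 0 ≤ det2 p x := by
  constructor
  · rintro ⟨a, b, ha, hb, rfl⟩
    rw [det2_smul_add_smul_left, det2_smul_add_smul_right, det2_self, det2_self]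
    constructor <;> positivity
  · rintro ⟨hxq, hpx⟩
    have hcramer : det2 p q • x = det2 x q • p + det2 p x • q := by
      ext <;> simp only [det2, Prod.fst_add, Prod.snd_add, Prod.smul_fst, Prod.smul_snd,
        smul_eq_mul] <;> ring
    refine ⟨det2 x q / det2 p q, det2 p x / det2 p q, by positivity, by positivity, ?_⟩
    calc x = (det2 p q)⁻¹ • (det2 p q • x) := (inv_smul_smul₀ hpq.ne' x).symm
      _ = _ := by rw [hcramer, smul_add, smul_smul, smul_smul, inv_mul_eq_div, inv_mul_eq_div]

lemma T2_eq_indicator {p q : ℝ × ℝ} (hpq : 0 < det2 p q) :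
    T2 p q = (posCone p q).indicator fun _ => (det2 p q)⁻¹ := by
  ext x
  classical
  rw [T2, Set.indicator_apply, ← abs_of_pos hpq]
  rfl

lemma preimage_sub_smul_posCone {m p q : ℝ × ℝ} (hmp : 0 < det2 m p) (hmq : 0 < det2 m q)
    (hpq : 0 < det2 p q) (x : ℝ × ℝ) :
    (fun t : ℝ => x - t • m) ⁻¹' posCone p q
      = Set.Icc (det2 x p / det2 m p) (det2 x q / det2 m q) := by
  ext t
  rw [Set.mem_preimage, mem_posCone_iff hpq, det2_sub_smul_left, det2_sub_smul_right, Set.mem_Icc,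
    div_le_iff₀ hmp, le_div_iff₀ hmq, det2_swap p x, det2_swap p m]
  constructor <;> rintro ⟨h1, h2⟩ <;> constructor <;> linarith

lemma integral_Ioi_zero_indicator_Icc (l u c : ℝ) :
    ∫ t in Set.Ioi 0, (Set.Icc l u).indicator (fun _ => c) t = max (u - max l 0) 0 * c := by
  rw [← integral_Ici_eq_integral_Ioi, integral_indicator_const _ measurableSet_Icc,
    measureReal_restrict_apply measurableSet_Icc, smul_eq_mul]
  have : Set.Icc l u ∩ Set.Ici 0 = Set.Icc (max l 0) u := by
    ext t; simp only [Set.mem_inter_iff, Set.mem_Icc, Set.mem_Ici, max_le_iff]; tauto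
  rw [this, Real.volume_real_Icc]

lemma Ttp_three_eq {m p q : ℝ × ℝ} (hmp : 0 < det2 m p) (hmq : 0 < det2 m q)
    (hpq : 0 < det2 p q) (x : ℝ × ℝ) :
    Ttp [m, p, q] x =
      max (det2 x q / det2 m q - max (det2 x p / det2 m p) 0) 0 * (det2 p q)⁻¹ := by
  have hintegrand : ∀ t, T2 p q (x - t • m)
      = (Set.Icc (det2 x p / det2 m p) (det2 x q / det2 m q)).indicator
          (fun _ => (det2 p q)⁻¹) t := by
    intro t
    rw [T2_eq_indicator hpq, ← preimage_sub_smul_posCone hmp hmq hpq x]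
    exact (Set.indicator_comp_right (fun t : ℝ => x - t • m)).symm
  simp only [Ttp, hintegrand, integral_Ioi_zero_indicator_Icc]

lemma Ttp_three_of_mem_posCone_left {m p q : ℝ × ℝ} (hmp : 0 < det2 m p) (hmq : 0 < det2 m q)
    (hpq : 0 < det2 p q) {x : ℝ × ℝ} (hx : x ∈ posCone m p) :
    Ttp [m, p, q] x = det2 m x / (det2 m p * det2 m q) := by
  obtain ⟨a, b, ha, hb, rfl⟩ := hx
  have hlower : det2 (a • m + b • p) p / det2 m p = a := by
    rw [det2_smul_add_smul_left, det2_self, mul_zero, add_zero]; field_simp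
  have hupper : det2 (a • m + b • p) q / det2 m q = a + b * det2 p q / det2 m q := by
    rw [det2_smul_add_smul_left]; field_simp
  rw [Ttp_three_eq hmp hmq hpq, hlower, hupper, max_eq_left ha, add_sub_cancel_left,
    max_eq_left (by positivity), det2_smul_add_smul_right, det2_self, mul_zero, zero_add]
  field_simp

lemma Ttp_three_of_mem_posCone_right {m p q : ℝ × ℝ} (hmp : 0 < det2 m p) (hmq : 0 < det2 m q)
    (hpq : 0 < det2 p q) {x : ℝ × ℝ} (hx : x ∈ posCone p q) :
    Ttp [m, p, q] x = det2 x q / (det2 p q * det2 m q) := by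
  obtain ⟨a, b, ha, hb, rfl⟩ := hx
  have hlower : det2 (a • p + b • q) p / det2 m p ≤ 0 := by
    rw [det2_smul_add_smul_left, det2_self, det2_swap p q, mul_zero, zero_add]
    exact div_nonpos_of_nonpos_of_nonneg (by nlinarith) hmp.le
  have hupper : det2 (a • p + b • q) q / det2 m q = a * det2 p q / det2 m q := by
    rw [det2_smul_add_smul_left, det2_self]; ring
  rw [Ttp_three_eq hmp hmq hpq, max_eq_right hlower, sub_zero, hupper,
    max_eq_left (by positivity), det2_smul_add_smul_left, det2_self, mul_zero, add_zero]
  field_simp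

lemma det2_intCast (a b c d : ℤ) :
    det2 ((a : ℝ), (b : ℝ)) ((c : ℝ), (d : ℝ)) = ((a * d - b * c : ℤ) : ℝ) := by
  push_cast; rfl

theorem truncatedPower_two_by_three_explicit
    (x1 y1 x2 y2 x3 y3 : ℤ)
    (hx1 : 0 < x1) (hx2 : 0 < x2) (hx3 : 0 < x3)
    (h12 : y1 * x2 < y2 * x1) (h23 : y2 * x3 < y3 * x2)
    (m1 m2 m3 : ℝ × ℝ)
    (hm1 : m1 = ((x1 : ℝ), (y1 : ℝ)))
    (hm2 : m2 = ((x2 : ℝ), (y2 : ℝ)))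
    (hm3 : m3 = ((x3 : ℝ), (y3 : ℝ))) :
    (∀ x y : ℝ, (∃ a b : ℝ, 0 ≤ a ∧ 0 ≤ b ∧ (x, y) = a • m1 + b • m2) →
      Ttp [m1, m2, m3] (x, y)
        = (y * (x1 : ℝ) - x * (y1 : ℝ)) /
            (((x1 * y2 - y1 * x2) * (x1 * y3 - y1 * x3) : ℤ) : ℝ)) ∧
    (∀ x y : ℝ, (∃ a b : ℝ, 0 ≤ a ∧ 0 ≤ b ∧ (x, y) = a • m2 + b • m3) →
      Ttp [m1, m2, m3] (x, y)
        = (x * (y3 : ℝ) - y * (x3 : ℝ)) /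
            (((x2 * y3 - y2 * x3) * (x1 * y3 - y1 * x3) : ℤ) : ℝ)) := by
  subst hm1 hm2 hm3
  -- from `x2 * Y13 = x3 * Y12 + x1 * Y23`
  have h13 : y1 * x3 < y3 * x1 := by nlinarith
  have hd12 : 0 < det2 ((x1 : ℝ), (y1 : ℝ)) ((x2 : ℝ), (y2 : ℝ)) := by
    rw [det2_intCast]; exact_mod_cast (by linarith)
  have hd13 : 0 < det2 ((x1 : ℝ), (y1 : ℝ)) ((x3 : ℝ), (y3 : ℝ)) := by
    rw [det2_intCast]; exact_mod_cast (by linarith)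
  have hd23 : 0 < det2 ((x2 : ℝ), (y2 : ℝ)) ((x3 : ℝ), (y3 : ℝ)) := by
    rw [det2_intCast]; exact_mod_cast (by linarith)
  refine ⟨fun x y hxy => ?_, fun x y hxy => ?_⟩
  · rw [Ttp_three_of_mem_posCone_left hd12 hd13 hd23 hxy]
    unfold det2; push_cast; ring
  · rw [Ttp_three_of_mem_posCone_right hd12 hd13 hd23 hxy]
    unfold det2; push_cast; ring
end

section
/- Let M = [[1,2,1,0],[0,1,1,1]]. For every (n₁,n₂) ∈ ℤ² with n₁ > 0 and 1/2 < n₂/n₁ < 1, the number of solutions x ∈ ℤ≥0⁴ to Mx = (n₁,n₂) equals n₁n₂ - n₁²/4 - n₂²/2 + (n₁+n₂)/2 + 7/8 + (-1)^{n₁}/8. -/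
/-- Auxiliary finset of pairs (b, c) with 2b + c ≤ N1 and b + c ≤ N2. -/
def pcS (N1 N2 : ℕ) : Finset (ℕ × ℕ) :=
  (Finset.range (N1 + 1) ×ˢ Finset.range (N2 + 1)).filter
    (fun p => 2 * p.1 + p.2 ≤ N1 ∧ p.1 + p.2 ≤ N2)

lemma mem_pcS {N1 N2 : ℕ} {p : ℕ × ℕ} :
    p ∈ pcS N1 N2 ↔ 2 * p.1 + p.2 ≤ N1 ∧ p.1 + p.2 ≤ N2 := by
  simp only [pcS, Finset.mem_filter, Finset.mem_product, Finset.mem_range]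
  omega

lemma pcS_zero (N1 : ℕ) : pcS N1 0 = {(0, 0)} := by
  ext ⟨a, b⟩
  simp only [mem_pcS, Finset.mem_singleton, Prod.mk.injEq]
  omega

lemma pcS_succ (N1 N2 : ℕ) (h : N2 + 1 ≤ N1) :
    (pcS N1 (N2 + 1)).card
      = (pcS N1 N2).card + (min (N2 + 1) (N1 - (N2 + 1)) + 1) := by
  have h1 : pcS N1 N2 = (pcS N1 (N2 + 1)).filter (fun p => p.1 + p.2 ≤ N2) := by
    ext ⟨a, b⟩
    simp only [mem_pcS, Finset.mem_filter]
    omega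
  have h2 : (pcS N1 (N2 + 1)).filter (fun p => ¬ p.1 + p.2 ≤ N2)
      = (Finset.range (min (N2 + 1) (N1 - (N2 + 1)) + 1)).image
          (fun b => (b, N2 + 1 - b)) := by
    ext ⟨a, b⟩
    simp only [Finset.mem_filter, mem_pcS, Finset.mem_image, Finset.mem_range,
      Prod.mk.injEq]
    constructor
    · rintro ⟨⟨hab1, hab2⟩, hab3⟩
      exact ⟨a, by omega, rfl, by omega⟩
    · rintro ⟨x, hx, rfl, rfl⟩
      omega
  have hinj : Function.Injective (fun b : ℕ => (b, N2 + 1 - b)) := by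
    intro x y hxy
    simpa using congrArg Prod.fst hxy
  have h3 := Finset.card_filter_add_card_filter_not
    (s := pcS N1 (N2 + 1)) (p := fun p => p.1 + p.2 ≤ N2)
  rw [← h1, h2, Finset.card_image_of_injective _ hinj, Finset.card_range] at h3
  omega

lemma pcS_card (N1 : ℕ) : ∀ N2, N2 ≤ N1 →
    8 * ((pcS N1 N2).card : ℤ) =
      if N1 ≤ 2 * N2 + 1 then
        8 * N1 * N2 - 2 * (N1 : ℤ) ^ 2 - 4 * (N2 : ℤ) ^ 2
          + 4 * N1 + 4 * N2 + 7 + (-1 : ℤ) ^ N1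
      else 4 * ((N2 : ℤ) + 1) * ((N2 : ℤ) + 2) := by
  intro N2
  induction N2 with
  | zero =>
    intro _
    rw [pcS_zero, Finset.card_singleton]
    by_cases hc : N1 ≤ 1
    · rw [if_pos hc]
      interval_cases N1 <;> norm_num
    · rw [if_neg hc]; norm_num
  | succ n ih =>
    intro h
    have ihn := ih (by omega)
    rw [pcS_succ N1 n h]
    set m := min (n + 1) (N1 - (n + 1)) with hmdef
    push_cast
    rcases Nat.even_or_odd N1 with hpar | hpar
    · have hpow : (-1 : ℤ) ^ N1 = 1 := hpar.neg_one_pow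
      have hmod : N1 % 2 = 0 := Nat.even_iff.mp hpar
      rw [hpow] at ihn ⊢
      by_cases hc2 : N1 ≤ 2 * (n + 1) + 1
      · rw [if_pos (by omega)]
        by_cases hc1 : N1 ≤ 2 * n + 1
        · rw [if_pos hc1] at ihn
          have hm : (m : ℤ) = (N1 : ℤ) - n - 1 := by omega
          linear_combination ihn + 8 * hm
        · rw [if_neg hc1] at ihn
          have hm : (m : ℤ) = (n : ℤ) + 1 := by omega
          have hN : (N1 : ℤ) = 2 * n + 2 := by omega
          rw [hN]
          linear_combination ihn + 8 * hm
      · rw [if_neg (by omega)]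
        rw [if_neg (by omega)] at ihn
        have hm : (m : ℤ) = (n : ℤ) + 1 := by omega
        linear_combination ihn + 8 * hm
    · have hpow : (-1 : ℤ) ^ N1 = -1 := hpar.neg_one_pow
      have hmod : N1 % 2 = 1 := Nat.odd_iff.mp hpar
      rw [hpow] at ihn ⊢
      by_cases hc2 : N1 ≤ 2 * (n + 1) + 1
      · rw [if_pos (by omega)]
        by_cases hc1 : N1 ≤ 2 * n + 1
        · rw [if_pos hc1] at ihn
          have hm : (m : ℤ) = (N1 : ℤ) - n - 1 := by omega
          linear_combination ihn + 8 * hm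
        · rw [if_neg hc1] at ihn
          have hm : (m : ℤ) = (n : ℤ) + 1 := by omega
          have hN : (N1 : ℤ) = 2 * n + 3 := by omega
          rw [hN]
          linear_combination ihn + 8 * hm
      · rw [if_neg (by omega)]
        rw [if_neg (by omega)] at ihn
        have hm : (m : ℤ) = (n : ℤ) + 1 := by omega
        linear_combination ihn + 8 * hm

lemma card_eq_pcS (N1 N2 : ℕ) :
    Nat.card {v : Fin 4 → ℕ //
        (v 0 : ℤ) + 2 * (v 1 : ℤ) + (v 2 : ℤ) = (N1 : ℤ) ∧
        (v 1 : ℤ) + (v 2 : ℤ) + (v 3 : ℤ) = (N2 : ℤ)} = (pcS N1 N2).card := by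
  rw [← Nat.card_eq_finsetCard]
  apply Nat.card_congr
  refine
    { toFun := fun x => ⟨(x.1 1, x.1 2), by
        have h1 := x.2.1; have h2 := x.2.2
        rw [mem_pcS]
        constructor <;> omega⟩
      invFun := fun p => ⟨![N1 - 2 * p.1.1 - p.1.2, p.1.1, p.1.2, N2 - p.1.1 - p.1.2], by
        have hp := p.2
        rw [mem_pcS] at hp
        constructor
        · show ((N1 - 2 * p.1.1 - p.1.2 : ℕ) : ℤ) + 2 * (p.1.1 : ℤ) + (p.1.2 : ℤ) = (N1 : ℤ)
          omega
        · show (p.1.1 : ℤ) + (p.1.2 : ℤ) + ((N2 - p.1.1 - p.1.2 : ℕ) : ℤ) = (N2 : ℤ)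
          omega⟩
      left_inv := fun x => by
        apply Subtype.ext
        have h1 := x.2.1; have h2 := x.2.2
        funext i
        fin_cases i
        · show N1 - 2 * x.1 1 - x.1 2 = x.1 0
          omega
        · rfl
        · rfl
        · show N2 - x.1 1 - x.1 2 = x.1 3
          omega
      right_inv := fun p => by
        apply Subtype.ext
        rfl }

/-- For `M = [[1,2,1,0],[0,1,1,1]]` and `(n₁,n₂)` in the open cone
`1/2 < n₂/n₁ < 1` (with `n₁ > 0`), the vector partition function equals
`n₁n₂ - n₁²/4 - n₂²/2 + (n₁+n₂)/2 + 7/8 + (-1)^{n₁}/8`. -/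
theorem vector_partition_example_cone2 (n1 n2 : ℤ)
    (h0 : 0 < n1) (h1 : n1 < 2 * n2) (h2 : n2 < n1) :
    (Nat.card {v : Fin 4 → ℕ //
        (v 0 : ℤ) + 2 * (v 1 : ℤ) + (v 2 : ℤ) = n1 ∧
        (v 1 : ℤ) + (v 2 : ℤ) + (v 3 : ℤ) = n2} : ℝ)
      = (n1 : ℝ) * n2 - (n1 : ℝ) ^ 2 / 4 - (n2 : ℝ) ^ 2 / 2
        + ((n1 : ℝ) + n2) / 2 + 7 / 8 + (-1 : ℝ) ^ n1 / 8 := by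
  obtain ⟨N1, rfl⟩ : ∃ N1 : ℕ, (N1 : ℤ) = n1 := ⟨n1.toNat, Int.toNat_of_nonneg h0.le⟩
  obtain ⟨N2, rfl⟩ : ∃ N2 : ℕ, (N2 : ℤ) = n2 := ⟨n2.toNat, Int.toNat_of_nonneg (by omega)⟩
  rw [card_eq_pcS N1 N2]
  have key := pcS_card N1 N2 (by exact_mod_cast h2.le)
  rw [if_pos (by omega)] at key
  have key' : (8 : ℝ) * ((pcS N1 N2).card : ℝ)
      = 8 * N1 * N2 - 2 * (N1 : ℝ) ^ 2 - 4 * (N2 : ℝ) ^ 2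
        + 4 * N1 + 4 * N2 + 7 + (-1 : ℝ) ^ N1 := by
    exact_mod_cast key
  rw [zpow_natCast]
  push_cast
  linarith [key']
end

section
/- Let M = [[1,2,1,0],[0,1,1,1]]. For every (n₁,n₂) ∈ ℤ² with n₁ > 0 and n₂/n₁ > 1, the number of solutions x ∈ ℤ≥0⁴ to Mx = (n₁,n₂) equals n₁²/4 + n₁ + 7/8 + (-1)^{n₁}/8. -/
/-- For `M = [[1,2,1,0],[0,1,1,1]]` and `(n₁,n₂)` in the open cone `n₂/n₁ > 1`
(with `n₁ > 0`), the vector partition function equals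
`n₁²/4 + n₁ + 7/8 + (-1)^{n₁}/8`. -/
theorem vector_partition_example_cone3 (n1 n2 : ℤ)
    (h0 : 0 < n1) (h1 : n1 < n2) :
    (Nat.card {v : Fin 4 → ℕ //
        (v 0 : ℤ) + 2 * (v 1 : ℤ) + (v 2 : ℤ) = n1 ∧
        (v 1 : ℤ) + (v 2 : ℤ) + (v 3 : ℤ) = n2} : ℝ)
      = (n1 : ℝ) ^ 2 / 4 + (n1 : ℝ) + 7 / 8 + (-1 : ℝ) ^ n1 / 8 := by
  obtain ⟨m, hmn⟩ : ∃ m : ℕ, (m : ℤ) = n1 := ⟨n1.toNat, Int.toNat_of_nonneg h0.le⟩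
  obtain ⟨p, hpn⟩ : ∃ p : ℕ, (p : ℤ) = n2 := ⟨n2.toNat, Int.toNat_of_nonneg (by omega)⟩
  subst hmn
  subst hpn
  have hmp : m < p := by omega
  -- Step 1: bijection with pairs (a,b) with 2a+b ≤ m
  have e1 : {v : Fin 4 → ℕ //
        (v 0 : ℤ) + 2 * (v 1 : ℤ) + (v 2 : ℤ) = (m : ℤ) ∧
        (v 1 : ℤ) + (v 2 : ℤ) + (v 3 : ℤ) = (p : ℤ)} ≃
      {q : ℕ × ℕ // 2 * q.1 + q.2 ≤ m} :=
    { toFun := fun v => ⟨(v.1 1, v.1 2), by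
        have h1 := v.2.1; omega⟩
      invFun := fun q => ⟨![m - (2 * q.1.1 + q.1.2), q.1.1, q.1.2, p - (q.1.1 + q.1.2)], by
        have hq := q.2
        constructor
        · show ((m - (2 * q.1.1 + q.1.2) : ℕ) : ℤ) + 2 * (q.1.1 : ℤ) + (q.1.2 : ℤ) = (m : ℤ)
          omega
        · show (q.1.1 : ℤ) + (q.1.2 : ℤ) + ((p - (q.1.1 + q.1.2) : ℕ) : ℤ) = (p : ℤ)
          omega⟩
      left_inv := fun v => by
        obtain ⟨f, h1, h2⟩ := v
        apply Subtype.ext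
        funext i
        fin_cases i
        · show m - (2 * f 1 + f 2) = f 0
          omega
        · rfl
        · rfl
        · show p - (f 1 + f 2) = f 3
          omega
      right_inv := fun q => by
        apply Subtype.ext
        rfl }
  have e2 : {q : ℕ × ℕ // 2 * q.1 + q.2 ≤ m} ≃
      (Σ a : Fin (m / 2 + 1), Fin (m + 1 - 2 * a.1)) :=
    { toFun := fun q => ⟨⟨q.1.1, by have := q.2; omega⟩,
        ⟨q.1.2, (by have := q.2; omega : q.1.2 < m + 1 - 2 * q.1.1)⟩⟩
      invFun := fun x => ⟨(x.1.1, x.2.1), by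
        have h1 := x.1.isLt
        have h2 := x.2.isLt
        have h3 : (x.2 : ℕ) < m + 1 - 2 * (x.1 : ℕ) := h2
        omega⟩
      left_inv := fun q => rfl
      right_inv := fun x => rfl }
  have hcard : Nat.card {v : Fin 4 → ℕ //
        (v 0 : ℤ) + 2 * (v 1 : ℤ) + (v 2 : ℤ) = (m : ℤ) ∧
        (v 1 : ℤ) + (v 2 : ℤ) + (v 3 : ℤ) = (p : ℤ)}
      = ∑ a ∈ Finset.range (m / 2 + 1), (m + 1 - 2 * a) := by
    rw [Nat.card_congr (e1.trans e2), Nat.card_eq_fintype_card, Fintype.card_sigma]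
    simp only [Fintype.card_fin]
    exact Fin.sum_univ_eq_sum_range (fun a => m + 1 - 2 * a) (m / 2 + 1)
  rw [hcard]
  clear hcard e1 e2
  have hcast : ∀ a ∈ Finset.range (m / 2 + 1), ((m + 1 - 2 * a : ℕ) : ℝ)
      = (m : ℝ) + 1 - 2 * a := by
    intro a ha
    simp only [Finset.mem_range] at ha
    rw [Nat.cast_sub (by omega : 2 * a ≤ m + 1)]
    push_cast
    ring
  rw [Nat.cast_sum, Finset.sum_congr rfl hcast, Finset.sum_sub_distrib,
    Finset.sum_const, Finset.card_range, ← Finset.mul_sum]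
  have gauss : (∑ a ∈ Finset.range (m / 2 + 1), (a : ℝ))
      = (((m / 2 : ℕ) : ℝ) + 1) * ((m / 2 : ℕ) : ℝ) / 2 := by
    have h := Finset.sum_range_id_mul_two (m / 2 + 1)
    have h' : ((∑ i ∈ Finset.range (m / 2 + 1), i : ℕ) : ℝ) * 2
        = (((m / 2 : ℕ) : ℝ) + 1) * ((m / 2 : ℕ) : ℝ) := by
      exact_mod_cast congrArg (Nat.cast : ℕ → ℝ) h
    push_cast at h'
    linarith
  rw [gauss, zpow_natCast]
  rcases Nat.even_or_odd m with ⟨t, ht⟩ | ⟨t, ht⟩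
  · have hm2 : m / 2 = t := by omega
    have hpow : (-1 : ℝ) ^ m = 1 := Even.neg_one_pow ⟨t, ht⟩
    rw [hm2, hpow, ht]
    push_cast
    ring
  · have hm2 : m / 2 = t := by omega
    have hpow : (-1 : ℝ) ^ m = -1 := Odd.neg_one_pow ⟨t, ht⟩
    rw [hm2, hpow, ht]
    push_cast
    ring
end

section
/- Let M be a 2×3 integer matrix with columns m₁=(x₁,y₁), m₂=(x₂,y₂), m₃=(x₃,y₃), xᵢ > 0, y₁/x₁ < y₂/x₂ < y₃/x₃, and suppose Y₁₂ = x₁y₂-y₁x₂, Y₁₃ = x₁y₃-y₁x₃, Y₂₃ = x₂y₃-y₂x₃ are pairwise relatively prime. Then for every (n₁,n₂) ∈ ℤ² in the closed cone spanned by m₁ and m₂, t((n₁,n₂)|M) = (n₂x₁-n₁y₁)/(Y₁₂Y₁₃) - {Y₁₃⁻¹(n₂x₁-n₁y₁)/Y₁₂} - {Y₁₂⁻¹(n₂x₁-n₁y₁)/Y₁₃} + 1, where Y₁₃⁻¹Y₁₃ ≡ 1 (mod Y₁₂) and Y₁₂⁻¹Y₁₂ ≡ 1 (mod Y₁₃).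 -/
/-!
Eliminating the first coordinate (`x₁ ·` second equation `- y₁ ·` first equation) turns `M v = n`
into the single equation `Y₁₂ v₁ + Y₁₃ v₂ = A` with `A = n₂x₁ - n₁y₁`. Conversely a solution
`(v₁, v₂)` lifts to a unique `v₀`: the residue `n - v₁m₂ - v₂m₃` is parallel to `m₁`, which is
primitive because `Y₁₂` and `Y₁₃` are coprime, and `v₀ Y₁₂ = det(n, m₂) + v₂ Y₂₃ ≥ 0` because `n`
lies in the cone over `m₁, m₂`. So `t(n|M)` counts the representations of `A` by the coprime pair
`Y₁₂, Y₁₃`, and Popoviciu's argument applies: with `c₀ = Y₁₃⁻¹A mod Y₁₂` and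
`A = b₁Y₁₂ + c₀Y₁₃`, the solutions are `(b₁ - jY₁₃, c₀ + jY₁₂)` for `0 ≤ j ≤ ⌊b₁ / Y₁₃⌋`, and
`b₁ ≡ Y₁₂⁻¹A (mod Y₁₃)`.
-/

theorem IsCoprime.exists_eq_mul_of_mul_eq_mul {R : Type*} [CommRing R] {x y r s : R}
    (h : IsCoprime x y) (hrs : x * s = y * r) : ∃ a, r = a * x ∧ s = a * y := by
  obtain ⟨u, v, huv⟩ := h
  exact ⟨u * r + v * s, by linear_combination -r * huv - v * hrs,
    by linear_combination -s * huv + u * hrs⟩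

theorem IsCoprime.of_isCoprime_minors {R : Type*} [CommRing R] {x1 y1 x2 y2 x3 y3 : R}
    (h : IsCoprime (x1 * y2 - y1 * x2) (x1 * y3 - y1 * x3)) : IsCoprime x1 y1 := by
  obtain ⟨u, v, huv⟩ := h
  exact ⟨u * y2 + v * y3, -(u * x2 + v * x3), by linear_combination huv⟩

theorem fract_intCast_div_of_pos {k : Type*} [Field k] [LinearOrder k] [IsStrictOrderedRing k]
    [FloorRing k] {r m : ℤ} (hm : 0 < m) : Int.fract ((r : k) / m) = ((r % m : ℤ) : k) / m := by
  lift m to ℕ using hm.le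
  rw [Int.cast_natCast]
  exact Int.fract_div_intCast_eq_div_intCast_mod

theorem card_nat_solutions_eq_card_Icc {p q A b₁ c₀ : ℤ} (hp : 0 < p) (hq : 0 < q)
    (hpq : IsCoprime p q) (hsol : b₁ * p + c₀ * q = A) (hc₀ : 0 ≤ c₀) (hc₀p : c₀ < p) :
    Nat.card {v : ℕ × ℕ // (v.1 : ℤ) * p + (v.2 : ℤ) * q = A} = (Finset.Icc 0 (b₁ / q)).card := by
  rw [← Nat.card_eq_finsetCard]
  symm
  refine Nat.card_eq_of_bijective
    (fun j => ⟨((b₁ - j * q).toNat, (c₀ + j * p).toNat), ?_⟩) ⟨?_, ?_⟩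
  · obtain ⟨hj0, hjq⟩ := Finset.mem_Icc.mp j.2
    have : (j : ℤ) * q ≤ b₁ := (Int.le_ediv_iff_mul_le hq).mp hjq
    rw [Int.toNat_of_nonneg (by linarith), Int.toNat_of_nonneg (by positivity)]
    linear_combination hsol
  · rintro ⟨j, hj⟩ ⟨j', hj'⟩ h
    have hc := congrArg (fun v => ((v.1.2 : ℕ) : ℤ)) h
    simp only at hc
    rw [Int.toNat_of_nonneg (by positivity [(Finset.mem_Icc.mp hj).1]),
      Int.toNat_of_nonneg (by positivity [(Finset.mem_Icc.mp hj').1])] at hc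
    exact Subtype.ext (mul_right_cancel₀ hp.ne' (by linarith))
  · rintro ⟨⟨b, c⟩, hbc⟩
    obtain ⟨j, hjc, hjb⟩ := hpq.exists_eq_mul_of_mul_eq_mul (r := (c : ℤ) - c₀) (s := b₁ - b)
      (by linear_combination hsol - hbc)
    have hj0 : 0 ≤ j := by nlinarith [Int.natCast_nonneg c]
    have hjq : j ≤ b₁ / q := (Int.le_ediv_iff_mul_le hq).mpr (by linarith [Int.natCast_nonneg b])
    refine ⟨⟨j, Finset.mem_Icc.mpr ⟨hj0, hjq⟩⟩, ?_⟩
    rw [Subtype.mk.injEq, show b₁ - j * q = b by linarith, show c₀ + j * p = c by linarith]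
    simp

theorem card_nat_solutions_eq_popoviciu {p q A q' p' : ℤ} (hp : 0 < p) (hq : 0 < q)
    (hq' : q' * q ≡ 1 [ZMOD p]) (hp' : p' * p ≡ 1 [ZMOD q]) (hA : 0 ≤ A) :
    (Nat.card {v : ℕ × ℕ // (v.1 : ℤ) * p + (v.2 : ℤ) * q = A} : ℝ)
      = (A : ℝ) / ((p * q : ℤ) : ℝ) - Int.fract (((q' * A : ℤ) : ℝ) / p)
        - Int.fract (((p' * A : ℤ) : ℝ) / q) + 1 := by
  have hpq : IsCoprime p q := by
    obtain ⟨k, hk⟩ := hq'.dvd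
    exact ⟨k, q', by linear_combination -hk⟩
  set c₀ := q' * A % p with hc₀
  have hc₀A : c₀ * q ≡ A [ZMOD p] :=
    calc c₀ * q ≡ q' * A * q [ZMOD p] := (Int.mod_modEq _ _).mul_right q
      _ = q' * q * A := by ring
      _ ≡ 1 * A [ZMOD p] := hq'.mul_right A
      _ = A := one_mul A
  obtain ⟨b₁, hb₁⟩ := hc₀A.dvd
  have hsol : b₁ * p + c₀ * q = A := by linear_combination -hb₁
  have hb₁A : b₁ ≡ p' * A [ZMOD q] := by
    obtain ⟨k, hk⟩ := hp'.dvd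
    exact Int.modEq_iff_dvd.mpr ⟨p' * c₀ - b₁ * k, by linear_combination -p' * hsol - b₁ * hk⟩
  have hc₀0 : 0 ≤ c₀ := Int.emod_nonneg _ hp.ne'
  have hc₀p : c₀ < p := Int.emod_lt_of_pos _ hp
  have hb₁q : -1 ≤ b₁ / q := (Int.le_ediv_iff_mul_le hq).mpr (by nlinarith)
  have hcard : (Nat.card {v : ℕ × ℕ // (v.1 : ℤ) * p + (v.2 : ℤ) * q = A} : ℤ) = b₁ / q + 1 := by
    rw [card_nat_solutions_eq_card_Icc hp hq hpq hsol hc₀0 hc₀p,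
      Int.card_Icc_of_le (a := 0) (b := b₁ / q) (by linarith), sub_zero]
  have hdiv : ((q * (b₁ / q) + b₁ % q : ℤ) : ℝ) = b₁ := congrArg _ (Int.mul_ediv_add_emod b₁ q)
  have hsolR : ((b₁ * p + c₀ * q : ℤ) : ℝ) = A := congrArg _ hsol
  rw [fract_intCast_div_of_pos hp, fract_intCast_div_of_pos hq, ← hc₀, ← hb₁A,
    show (Nat.card _ : ℝ) = ((b₁ / q + 1 : ℤ) : ℝ) by exact_mod_cast hcard]
  push_cast at hdiv hsolR ⊢
  field_simp
  linear_combination (p : ℝ) * hdiv + hsolR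

theorem minors_nonneg_of_mem_cone {x1 y1 x2 y2 n1 n2 : ℤ} (h12 : 0 ≤ x1 * y2 - y1 * x2)
    (hcone : ∃ l1 l2 : ℝ, 0 ≤ l1 ∧ 0 ≤ l2 ∧
      (n1 : ℝ) = l1 * x1 + l2 * x2 ∧ (n2 : ℝ) = l1 * y1 + l2 * y2) :
    0 ≤ n2 * x1 - n1 * y1 ∧ 0 ≤ n1 * y2 - n2 * x2 := by
  obtain ⟨l1, l2, hl1, hl2, hn1, hn2⟩ := hcone
  have hY : (0 : ℝ) ≤ ((x1 * y2 - y1 * x2 : ℤ) : ℝ) := by exact_mod_cast h12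
  have hA : ((n2 * x1 - n1 * y1 : ℤ) : ℝ) = l2 * ((x1 * y2 - y1 * x2 : ℤ) : ℝ) := by
    push_cast; rw [hn1, hn2]; ring
  have hB : ((n1 * y2 - n2 * x2 : ℤ) : ℝ) = l1 * ((x1 * y2 - y1 * x2 : ℤ) : ℝ) := by
    push_cast; rw [hn1, hn2]; ring
  constructor
  · exact_mod_cast hA ▸ mul_nonneg hl2 hY
  · exact_mod_cast hB ▸ mul_nonneg hl1 hY

theorem card_solutions_eq_card_minor_solutions {x1 y1 x2 y2 x3 y3 n1 n2 : ℤ}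
    (hx : IsCoprime x1 y1) (h12 : 0 < x1 * y2 - y1 * x2) (h23 : 0 ≤ x2 * y3 - y2 * x3)
    (hn : 0 ≤ n1 * y2 - n2 * x2) :
    Nat.card {v : Fin 3 → ℕ //
        (v 0 : ℤ) * x1 + (v 1 : ℤ) * x2 + (v 2 : ℤ) * x3 = n1 ∧
        (v 0 : ℤ) * y1 + (v 1 : ℤ) * y2 + (v 2 : ℤ) * y3 = n2}
      = Nat.card {w : ℕ × ℕ //
        (w.1 : ℤ) * (x1 * y2 - y1 * x2) + (w.2 : ℤ) * (x1 * y3 - y1 * x3) = n2 * x1 - n1 * y1} := by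
  refine Nat.card_eq_of_bijective (fun v => ⟨(v.1 1, v.1 2), ?_⟩) ⟨?_, ?_⟩
  · obtain ⟨e1, e2⟩ := v.2
    linear_combination x1 * e2 - y1 * e1
  · rintro ⟨v, hv1, hv2⟩ ⟨w, hw1, hw2⟩ h
    simp only [Subtype.mk.injEq, Prod.mk.injEq] at h
    obtain ⟨h1, h2⟩ := h
    have h0 : (v 0 : ℤ) * (x1 * y2 - y1 * x2) = (w 0 : ℤ) * (x1 * y2 - y1 * x2) := by
      rw [h1, h2] at hv1 hv2
      linear_combination y2 * hv1 - x2 * hv2 - y2 * hw1 + x2 * hw2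
    apply Subtype.ext
    funext i
    fin_cases i
    · exact_mod_cast mul_right_cancel₀ h12.ne' h0
    · exact h1
    · exact h2
  · rintro ⟨⟨b, c⟩, hbc⟩
    obtain ⟨a, ha1, ha2⟩ := hx.exists_eq_mul_of_mul_eq_mul
      (r := n1 - b * x2 - c * x3) (s := n2 - b * y2 - c * y3) (by linear_combination -hbc)
    have ha : a * (x1 * y2 - y1 * x2) = n1 * y2 - n2 * x2 + c * (x2 * y3 - y2 * x3) := by
      linear_combination -y2 * ha1 + x2 * ha2
    have ha0 : 0 ≤ a := nonneg_of_mul_nonneg_left (ha ▸ by positivity) h12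
    refine ⟨⟨![a.toNat, b, c], ?_, ?_⟩, rfl⟩
    · show ((a.toNat : ℕ) : ℤ) * x1 + (b : ℤ) * x2 + (c : ℤ) * x3 = n1
      rw [Int.toNat_of_nonneg ha0]
      linear_combination -ha1
    · show ((a.toNat : ℕ) : ℤ) * y1 + (b : ℤ) * y2 + (c : ℤ) * y3 = n2
      rw [Int.toNat_of_nonneg ha0]
      linear_combination -ha2

theorem generalized_popoviciu_cone1_general
    (x1 y1 x2 y2 x3 y3 : ℤ)
    (hx1 : 0 < x1) (hx2 : 0 < x2) (hx3 : 0 < x3)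
    (h12 : y1 * x2 < y2 * x1) (h23 : y2 * x3 < y3 * x2)
    (Y12 Y13 : ℤ)
    (hY12 : Y12 = x1 * y2 - y1 * x2)
    (hY13 : Y13 = x1 * y3 - y1 * x3)
    (hc1 : IsCoprime Y12 Y13)
    (Y13inv Y12inv : ℤ)
    (hY13inv : Y13inv * Y13 ≡ 1 [ZMOD Y12])
    (hY12inv : Y12inv * Y12 ≡ 1 [ZMOD Y13])
    (n1 n2 : ℤ)
    (hcone : ∃ l1 l2 : ℝ, 0 ≤ l1 ∧ 0 ≤ l2 ∧
      (n1 : ℝ) = l1 * x1 + l2 * x2 ∧ (n2 : ℝ) = l1 * y1 + l2 * y2) :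
    (Nat.card {v : Fin 3 → ℕ //
        (v 0 : ℤ) * x1 + (v 1 : ℤ) * x2 + (v 2 : ℤ) * x3 = n1 ∧
        (v 0 : ℤ) * y1 + (v 1 : ℤ) * y2 + (v 2 : ℤ) * y3 = n2} : ℝ)
      = ((n2 * x1 - n1 * y1 : ℤ) : ℝ) / ((Y12 * Y13 : ℤ) : ℝ)
        - Int.fract (((Y13inv * (n2 * x1 - n1 * y1) : ℤ) : ℝ) / (Y12 : ℝ))
        - Int.fract (((Y12inv * (n2 * x1 - n1 * y1) : ℤ) : ℝ) / (Y13 : ℝ)) + 1 := by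
  subst hY12 hY13
  have hY12 : 0 < x1 * y2 - y1 * x2 := by linarith
  have hY23 : 0 < x2 * y3 - y2 * x3 := by linarith
  have hY13 : 0 < x1 * y3 - y1 * x3 := by
    refine pos_of_mul_pos_right (a := x2) ?_ hx2.le
    rw [show x2 * (x1 * y3 - y1 * x3) = x3 * (x1 * y2 - y1 * x2) + x1 * (x2 * y3 - y2 * x3) by ring]
    positivity
  obtain ⟨hA, hB⟩ := minors_nonneg_of_mem_cone hY12.le hcone
  rw [card_solutions_eq_card_minor_solutions hc1.of_isCoprime_minors hY12 hY23.le hB]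
  exact card_nat_solutions_eq_popoviciu hY12 hY13 hY13inv hY12inv hA

/-- Generalized Popoviciu formula on the first fundamental cone, when the
minors `Y₁₂, Y₁₃, Y₂₃` are pairwise coprime. -/
theorem generalized_popoviciu_cone1
    (x1 y1 x2 y2 x3 y3 : ℤ)
    (hx1 : 0 < x1) (hx2 : 0 < x2) (hx3 : 0 < x3)
    (h12 : y1 * x2 < y2 * x1) (h23 : y2 * x3 < y3 * x2)
    (Y12 Y13 Y23 : ℤ)
    (hY12 : Y12 = x1 * y2 - y1 * x2)
    (hY13 : Y13 = x1 * y3 - y1 * x3)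
    (hY23 : Y23 = x2 * y3 - y2 * x3)
    (hc1 : IsCoprime Y12 Y13) (hc2 : IsCoprime Y12 Y23) (hc3 : IsCoprime Y13 Y23)
    (Y13inv Y12inv : ℤ)
    (hY13inv : Y13inv * Y13 ≡ 1 [ZMOD Y12])
    (hY12inv : Y12inv * Y12 ≡ 1 [ZMOD Y13])
    (n1 n2 : ℤ)
    (hcone : ∃ l1 l2 : ℝ, 0 ≤ l1 ∧ 0 ≤ l2 ∧
      (n1 : ℝ) = l1 * x1 + l2 * x2 ∧ (n2 : ℝ) = l1 * y1 + l2 * y2) :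
    (Nat.card {v : Fin 3 → ℕ //
        (v 0 : ℤ) * x1 + (v 1 : ℤ) * x2 + (v 2 : ℤ) * x3 = n1 ∧
        (v 0 : ℤ) * y1 + (v 1 : ℤ) * y2 + (v 2 : ℤ) * y3 = n2} : ℝ)
      = ((n2 * x1 - n1 * y1 : ℤ) : ℝ) / ((Y12 * Y13 : ℤ) : ℝ)
        - Int.fract (((Y13inv * (n2 * x1 - n1 * y1) : ℤ) : ℝ) / (Y12 : ℝ))
        - Int.fract (((Y12inv * (n2 * x1 - n1 * y1) : ℤ) : ℝ) / (Y13 : ℝ)) + 1 :=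
  generalized_popoviciu_cone1_general x1 y1 x2 y2 x3 y3 hx1 hx2 hx3 h12 h23 Y12 Y13 hY12 hY13 hc1
    Y13inv Y12inv hY13inv hY12inv n1 n2 hcone
end

section
/- Under the hypotheses that M is a 2×3 integer matrix with pairwise coprime minors Y₁₂, Y₁₃, Y₂₃ and n = (n₁,n₂) lies in the closed cone spanned by m₁ and m₂, the counting function satisfies t(N·n|M) = t(N(n₂x₁ - n₁y₁) | (Y₁₂, Y₁₃)) for all N ∈ ℤ≥0, i.e., the number of nonnegative integer solutions of Mx = N·n equals the number of nonnegative integer solutions of Y₁₂·u + Y₁₃·v = N(n₂x₁ - n₁y₁). -/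
/-- Along the ray `N·n` in the first cone, the vector partition function of the
`2×3` matrix `M` with pairwise coprime minors agrees with the two-variable
partition function of `(Y₁₂, Y₁₃)` at `N(n₂x₁ - n₁y₁)`. -/
theorem vector_partition_ray_reduction
    (x1 y1 x2 y2 x3 y3 : ℤ)
    (hx1 : 0 < x1) (hx2 : 0 < x2) (hx3 : 0 < x3)
    (h12 : y1 * x2 < y2 * x1) (h23 : y2 * x3 < y3 * x2)
    (Y12 Y13 Y23 : ℤ)
    (hY12 : Y12 = x1 * y2 - y1 * x2)
    (hY13 : Y13 = x1 * y3 - y1 * x3)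
    (hY23 : Y23 = x2 * y3 - y2 * x3)
    (hc1 : IsCoprime Y12 Y13) (hc2 : IsCoprime Y12 Y23) (hc3 : IsCoprime Y13 Y23)
    (n1 n2 : ℤ)
    (hcone : ∃ l1 l2 : ℝ, 0 ≤ l1 ∧ 0 ≤ l2 ∧
      (n1 : ℝ) = l1 * x1 + l2 * x2 ∧ (n2 : ℝ) = l1 * y1 + l2 * y2)
    (N : ℕ) :
    Nat.card {v : Fin 3 → ℕ //
        (v 0 : ℤ) * x1 + (v 1 : ℤ) * x2 + (v 2 : ℤ) * x3 = (N : ℤ) * n1 ∧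
        (v 0 : ℤ) * y1 + (v 1 : ℤ) * y2 + (v 2 : ℤ) * y3 = (N : ℤ) * n2}
      = Nat.card {p : ℕ × ℕ //
          Y12 * (p.1 : ℤ) + Y13 * (p.2 : ℤ) = (N : ℤ) * (n2 * x1 - n1 * y1)} := by
  have hY12pos : 0 < Y12 := by rw [hY12]; nlinarith
  have hY23pos : 0 < Y23 := by rw [hY23]; nlinarith
  have hcop : IsCoprime x1 y1 := by
    obtain ⟨a, b, hab⟩ := hc1
    exact ⟨a * y2 + b * y3, -(a * x2 + b * x3), by
      rw [hY12, hY13] at hab; linear_combination hab⟩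
  have hψ : 0 ≤ n1 * y2 - n2 * x2 := by
    obtain ⟨l1, l2, hl1, hl2, he1, he2⟩ := hcone
    have hr : (0:ℝ) ≤ (n1:ℝ) * y2 - (n2:ℝ) * x2 := by
      rw [he1, he2]
      have h0 : (0:ℝ) < ((x1 * y2 - y1 * x2 : ℤ) : ℝ) := by
        exact_mod_cast hY12 ▸ hY12pos
      push_cast at h0
      nlinarith
    exact_mod_cast hr
  let f : {v : Fin 3 → ℕ //
        (v 0 : ℤ) * x1 + (v 1 : ℤ) * x2 + (v 2 : ℤ) * x3 = (N : ℤ) * n1 ∧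
        (v 0 : ℤ) * y1 + (v 1 : ℤ) * y2 + (v 2 : ℤ) * y3 = (N : ℤ) * n2} →
      {p : ℕ × ℕ // Y12 * (p.1 : ℤ) + Y13 * (p.2 : ℤ) = (N : ℤ) * (n2 * x1 - n1 * y1)} :=
    fun s => ⟨(s.1 1, s.1 2), by
      obtain ⟨h1, h2⟩ := s.2
      rw [hY12, hY13]
      linear_combination x1 * h2 - y1 * h1⟩
  apply Nat.card_congr (Equiv.ofBijective f ⟨?_, ?_⟩)
  · rintro ⟨v, hv1, hv2⟩ ⟨w, hw1, hw2⟩ h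
    simp only [f, Subtype.mk.injEq, Prod.mk.injEq] at h
    obtain ⟨e1, e2⟩ := h
    apply Subtype.ext
    have e0 : v 0 = w 0 := by
      have : (v 0 : ℤ) * x1 = (w 0 : ℤ) * x1 := by
        rw [e1, e2] at hv1; linear_combination hv1 - hw1
      exact_mod_cast mul_right_cancel₀ hx1.ne' this
    funext i
    fin_cases i <;> assumption
  · rintro ⟨⟨u, v⟩, hp⟩
    rw [hY12, hY13] at hp
    -- divisibility: x1 ∣ d where d = N*n1 - u*x2 - v*x3
    have h1 : x1 ∣ y1 * ((N:ℤ) * n1 - (u:ℤ) * x2 - (v:ℤ) * x3) :=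
      ⟨(N:ℤ) * n2 - y2 * u - y3 * v, by linear_combination hp⟩
    obtain ⟨a, ha⟩ := hcop.dvd_of_dvd_mul_left h1
    -- nonnegativity of a
    have h2 : (x1 * a) * Y12
        = x1 * ((v:ℤ) * Y23 + (N:ℤ) * (n1 * y2 - n2 * x2)) := by
      rw [← ha, hY12, hY23]; linear_combination (-x2) * hp
    have h3 : 0 ≤ a * Y12 := by
      have := mul_left_cancel₀ hx1.ne' (by linear_combination h2 :
        x1 * (a * Y12) = x1 * ((v:ℤ) * Y23 + (N:ℤ) * (n1 * y2 - n2 * x2)))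
      rw [this]
      have hv : (0:ℤ) ≤ (v:ℤ) := Int.natCast_nonneg v
      have hN : (0:ℤ) ≤ (N:ℤ) := Int.natCast_nonneg N
      positivity
    have ha0 : 0 ≤ a := by nlinarith [h3, hY12pos]
    refine ⟨⟨![a.toNat, u, v], ?_, ?_⟩, ?_⟩
    · simp only [Matrix.cons_val_zero, Matrix.cons_val_one, Matrix.head_cons,
        Matrix.cons_val_two, Matrix.tail_cons, Int.toNat_of_nonneg ha0]
      linear_combination -ha
    · simp only [Matrix.cons_val_zero, Matrix.cons_val_one, Matrix.head_cons,
        Matrix.cons_val_two, Matrix.tail_cons, Int.toNat_of_nonneg ha0]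
      -- a*y1 + u*y2 + v*y3 = N*n2 ; multiply by x1
      have hmul : x1 * ((a:ℤ) * y1 + (u:ℤ) * y2 + (v:ℤ) * y3) = x1 * ((N:ℤ) * n2) := by
        linear_combination (-y1) * ha + hp
      -- need correct combination; fix below if wrong
      exact mul_left_cancel₀ hx1.ne' hmul
    · apply Subtype.ext
      simp [f]
end

section
/- Let a and b be coprime positive integers and define f(n) = n/(ab) - {b⁻¹n/a} - {a⁻¹n/b} + 1 for n ∈ ℤ, where b⁻¹b ≡ 1 (mod a) and a⁻¹a ≡ 1 (mod b). Then f(n) > 0 for every integer n ≥ ab - a - b + 1, and f(ab - a - b) = 0. -/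
/-!
Writing `{x / a} = (x mod a) / a`, the function becomes
`(N - b·(b⁻¹N mod a) - a·(a⁻¹N mod b) + ab) / (ab)`. Since the residues are at most `a - 1`
and `b - 1`, the numerator is at least `N - (ab - a - b)`, hence positive beyond the Frobenius
number. At `N = ab - a - b ≡ -b (mod a)` we get `b⁻¹N ≡ -1 (mod a)` and symmetrically
`a⁻¹N ≡ -1 (mod b)`, so both residues are maximal and the numerator vanishes.
-/

lemma Int.emod_eq_sub_one_of_modEq_neg_one {x n : ℤ} (hn : 0 < n) (h : x ≡ -1 [ZMOD n]) :
    x % n = n - 1 := by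
  have h' : x ≡ n - 1 [ZMOD n] := h.trans (Int.modEq_iff_dvd.mpr ⟨1, by ring⟩)
  rw [h'.eq, Int.emod_eq_of_lt (by omega) (by omega)]

lemma emod_mul_frobenius_eq {a b u : ℤ} (ha : 0 < a) (hu : u * b ≡ 1 [ZMOD a]) :
    u * (a * b - a - b) % a = a - 1 := by
  obtain ⟨k, hk⟩ := Int.modEq_iff_dvd.mp hu
  exact Int.emod_eq_sub_one_of_modEq_neg_one ha
    (Int.modEq_iff_dvd.mpr ⟨-k - u * (b - 1), by linear_combination -hk⟩)

lemma sub_fract_sub_fract_add_one_eq (a b : ℕ) (ha : a ≠ 0) (hb : b ≠ 0) (N x y : ℤ) :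
    (N : ℝ) / ((a : ℝ) * b) - Int.fract ((x : ℝ) / (a : ℝ)) - Int.fract ((y : ℝ) / (b : ℝ)) + 1
      = ((N - b * (x % a) - a * (y % b) + a * b : ℤ) : ℝ) / ((a : ℝ) * b) := by
  rw [Int.fract_div_intCast_eq_div_intCast_mod, Int.fract_div_intCast_eq_div_intCast_mod]
  push_cast
  field_simp

lemma sub_mul_emod_sub_mul_emod_add_mul_pos {a b N : ℤ} (x y : ℤ) (ha : 0 < a) (hb : 0 < b)
    (hN : a * b - a - b < N) : 0 < N - b * (x % a) - a * (y % b) + a * b := by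
  have hx : x % a ≤ a - 1 := by have := Int.emod_lt_of_pos x ha; omega
  have hy : y % b ≤ b - 1 := by have := Int.emod_lt_of_pos y hb; omega
  nlinarith

theorem popoviciu_function_frobenius_general (a b : ℕ) (ha : 0 < a) (hb : 0 < b)
    (binv ainv : ℤ)
    (hbinv : binv * (b : ℤ) ≡ 1 [ZMOD (a : ℤ)])
    (hainv : ainv * (a : ℤ) ≡ 1 [ZMOD (b : ℤ)]) :
    (∀ N : ℤ, (a : ℤ) * b - a - b + 1 ≤ N →
      0 < (N : ℝ) / ((a : ℝ) * b)
          - Int.fract (((binv * N : ℤ) : ℝ) / (a : ℝ))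
          - Int.fract (((ainv * N : ℤ) : ℝ) / (b : ℝ)) + 1) ∧
    ((((a : ℤ) * b - a - b : ℤ) : ℝ) / ((a : ℝ) * b)
        - Int.fract (((binv * ((a : ℤ) * b - a - b) : ℤ) : ℝ) / (a : ℝ))
        - Int.fract (((ainv * ((a : ℤ) * b - a - b) : ℤ) : ℝ) / (b : ℝ)) + 1 = 0) := by
  have haZ : (0 : ℤ) < a := by exact_mod_cast ha
  have hbZ : (0 : ℤ) < b := by exact_mod_cast hb
  simp only [sub_fract_sub_fract_add_one_eq a b ha.ne' hb.ne']
  refine ⟨fun N hN => div_pos ?_ (by positivity), ?_⟩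
  · exact_mod_cast sub_mul_emod_sub_mul_emod_add_mul_pos _ _ haZ hbZ (by omega)
  · have hainv' := emod_mul_frobenius_eq hbZ hainv
    rw [show (b : ℤ) * a - b - a = a * b - a - b by ring] at hainv'
    rw [emod_mul_frobenius_eq haZ hbinv, hainv',
      show (a * b - a - b : ℤ) - b * (a - 1) - a * (b - 1) + a * b = 0 by ring,
      Int.cast_zero, zero_div]

/-- Popoviciu's formula combined with the Frobenius number: the function
`f(N) = N/(ab) - {b⁻¹N/a} - {a⁻¹N/b} + 1` is positive for all
`N ≥ ab - a - b + 1`, and vanishes at `N = ab - a - b`. -/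
theorem popoviciu_function_frobenius (a b : ℕ) (ha : 0 < a) (hb : 0 < b)
    (hab : Nat.Coprime a b) (binv ainv : ℤ)
    (hbinv : binv * (b : ℤ) ≡ 1 [ZMOD (a : ℤ)])
    (hainv : ainv * (a : ℤ) ≡ 1 [ZMOD (b : ℤ)]) :
    (∀ N : ℤ, (a : ℤ) * b - a - b + 1 ≤ N →
      0 < (N : ℝ) / ((a : ℝ) * b)
          - Int.fract (((binv * N : ℤ) : ℝ) / (a : ℝ))
          - Int.fract (((ainv * N : ℤ) : ℝ) / (b : ℝ)) + 1) ∧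
    ((((a : ℤ) * b - a - b : ℤ) : ℝ) / ((a : ℝ) * b)
        - Int.fract (((binv * ((a : ℤ) * b - a - b) : ℤ) : ℝ) / (a : ℝ))
        - Int.fract (((ainv * ((a : ℤ) * b - a - b) : ℤ) : ℝ) / (b : ℝ)) + 1 = 0) :=
  popoviciu_function_frobenius_general a b ha hb binv ainv hbinv hainv
end
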